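/- Let C₀(Q) ⊆ A be a central non-degenerate inclusion and suppose the set Q^unif_simple = {q ∈ Q : A/J^unif_q is simple} is non-empty. Then for every non-empty subset Q₀ ⊆ Q^unif_simple, the closed two-sided ideal ⋂_{q∈Q₀} J^unif_q is dominant relative to C₀(Q): every proper closed two-sided ideal L of A with C₀(Q) ∩ L ⊆ C₀(Q) ∩ (⋂_{q∈Q₀} J^unif_q) satisfies L ⊆ ⋂_{q∈Q₀} J^unif_q. -/

import Mathlib

open scoped ComplexOrder
open ZeroAtInfty

/-- The smallest closed two-sided ideal of `A` containing `S` (as a set): the intersection of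
all closed two-sided ideals containing `S`. -/
def closedIdealGenBy {A : Type*} [NonUnitalCStarAlgebra A] (S : Set A) : Set A :=
  ⋂₀ {L : Set A | (∃ I : TwoSidedIdeal A, (I : Set A) = L) ∧ IsClosed L ∧ S ⊆ L}

/-- `J^unif_q`: the closed two-sided ideal of `A` generated by
`C_{0,q}(Q) = {f ∈ C₀(Q) : f q = 0}` (viewed in `A` via the inclusion `ι`). -/
def Junif {Q : Type*} [TopologicalSpace Q] [LocallyCompactSpace Q] [T2Space Q]
    {A : Type*} [NonUnitalCStarAlgebra A] (ι : C₀(Q, ℂ) →⋆ₙₐ[ℂ] A) (q : Q) : Set A :=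
  closedIdealGenBy {a : A | ∃ f : C₀(Q, ℂ), f q = 0 ∧ a = ι f}

/-- `A / J` is a simple C*-algebra, encoded via the correspondence between closed two-sided
ideals of `A / J` and closed two-sided ideals of `A` containing `J`: `J` is proper and the only
closed two-sided ideals of `A` containing `J` are `J` itself and `A`. -/
def QuotientSimpleBy {A : Type*} [NonUnitalCStarAlgebra A] (J : Set A) : Prop :=
  J ≠ Set.univ ∧ ∀ L : TwoSidedIdeal A, IsClosed (L : Set A) → J ⊆ (L : Set A) →
    (L : Set A) = J ∨ (L : Set A) = Set.univ

section Aux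

lemma core_estimate {B : Type*} [CStarAlgebra B] [PartialOrder B] [StarOrderedRing B]
    (F V : B) (hF : IsSelfAdjoint F)
    (hV : 0 ≤ V) (huV : F * F ≤ V) {ε : ℝ} (hε : 0 < ε) :
    ∃ N : B, ‖F * F - (F * V) * (N * F)‖ ≤ ε := by
  have hVsa : IsSelfAdjoint V := .of_nonneg hV
  set η : ℝ → ℝ := fun t => (max t 0 + ε)⁻¹ with hη
  have hηpos : ∀ t, 0 < max t 0 + ε := fun t => by positivity
  have hηcont : Continuous η := Continuous.inv₀ (by fun_prop) (fun t => (hηpos t).ne')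
  set ψf : ℝ → ℝ := fun t => ε * η t with hψf
  have hψfnn : ∀ t, 0 ≤ ψf t := fun t => by
    have := (hηpos t).le
    positivity
  have hsqcont : Continuous (fun t => Real.sqrt (ψf t)) := by fun_prop
  have hmc : Continuous (fun t : ℝ => t * η t) := continuous_id'.mul hηcont
  have hspec : ∀ t ∈ spectrum ℝ V, 0 ≤ t := fun t ht => spectrum_nonneg_of_nonneg hV ht
  refine ⟨cfc η V, ?_⟩
  set N := cfc η V with hN
  set d := cfc (fun t => Real.sqrt (ψf t)) V with hd
  have hVN : V * N = cfc (fun t : ℝ => t * η t) V := by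
    rw [cfc_mul _ _ V continuous_id'.continuousOn hηcont.continuousOn, cfc_id' ℝ V hVsa, hN]
  have hone : cfc (fun t : ℝ => 1 - t * η t) V = 1 - V * N := by
    have hone1 : cfc (fun _ : ℝ => (1:ℝ)) V = 1 := cfc_one ℝ V
    rw [cfc_sub _ _ V continuousOn_const hmc.continuousOn, hone1, hVN]
  have key : F * F - (F * V) * (N * F) = F * (cfc ψf V) * F := by
    have h2 : cfc ψf V = cfc (fun t : ℝ => 1 - t * η t) V := by
      apply cfc_congr
      intro t ht
      have h4 : max t 0 = t := max_eq_left (hspec t ht)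
      have h5 := hηpos t
      simp only [hψf, hη, h4] at h5 ⊢
      field_simp
      ring
    rw [h2, hone]
    noncomm_ring
  rw [key]
  have hdd : d * d = cfc ψf V := by
    rw [hd, ← cfc_mul _ _ V hsqcont.continuousOn hsqcont.continuousOn]
    exact cfc_congr fun t _ => Real.mul_self_sqrt (hψfnn t)
  have hdsa : IsSelfAdjoint d := cfc_predicate _ V
  set c := d * F with hc
  have h6 : F * (cfc ψf V) * F = star c * c := by
    rw [hc, star_mul, hdsa.star_eq, hF.star_eq, ← hdd]; noncomm_ring
  have h7 : c * star c = d * (F * F) * d := by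
    rw [hc, star_mul, hdsa.star_eq, hF.star_eq]; noncomm_ring
  rw [h6, show ‖star c * c‖ = ‖c * star c‖ by
    rw [CStarRing.norm_star_mul_self, CStarRing.norm_self_mul_star], h7]
  have h9 : d * (F * F) * d ≤ d * V * d := by
    have := star_left_conjugate_le_conjugate huV d
    rwa [hdsa.star_eq] at this
  have h10 : 0 ≤ d * (F * F) * d := by
    have h11 : (0 : B) ≤ F * F := by
      simpa [hF.star_eq] using star_mul_self_nonneg F
    have := star_left_conjugate_nonneg h11 d
    rwa [hdsa.star_eq] at this
  refine le_trans (CStarAlgebra.norm_le_norm_of_nonneg_of_le h10 h9) ?_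
  have h12 : cfc (fun t => Real.sqrt (ψf t) * (t * Real.sqrt (ψf t))) V = d * V * d := by
    rw [cfc_mul (fun t => Real.sqrt (ψf t)) (fun t => t * Real.sqrt (ψf t)) V hsqcont.continuousOn (continuous_id'.mul hsqcont).continuousOn,
      cfc_mul (fun t : ℝ => t) (fun t => Real.sqrt (ψf t)) V continuous_id'.continuousOn hsqcont.continuousOn,
      cfc_id' ℝ V hVsa, ← hd, mul_assoc]
  rw [← h12]
  apply norm_cfc_le hε.le
  intro t ht
  have h14 : 0 ≤ t := hspec t ht
  have h4 : max t 0 = t := max_eq_left h14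
  have h13 : Real.sqrt (ψf t) * (t * Real.sqrt (ψf t)) = ψf t * t := by
    rw [mul_comm t, ← mul_assoc, Real.mul_self_sqrt (hψfnn t)]
  have h16 : η t * t ≤ 1 := by
    simp only [hη, h4]
    rw [inv_mul_le_iff₀ (by linarith)]
    linarith
  have h15 : ψf t * t ≤ ε :=
    calc ψf t * t = ε * (η t * t) := by rw [hψf]; ring
    _ ≤ ε * 1 := mul_le_mul_of_nonneg_left h16 hε.le
    _ = ε := mul_one ε
  rw [h13, Real.norm_eq_abs, abs_of_nonneg (by positivity)]
  exact h15

variable {Q : Type*} [TopologicalSpace Q] [LocallyCompactSpace Q] [T2Space Q]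

/-- Norm control for `C₀` functions. -/
lemma c0_norm_le (g : C₀(Q, ℂ)) {c : ℝ} (hc : 0 ≤ c) (h : ∀ x, ‖g x‖ ≤ c) : ‖g‖ ≤ c := by
  rw [← ZeroAtInftyContinuousMap.norm_toBCF_eq_norm]
  exact BoundedContinuousFunction.norm_le hc |>.mpr h

lemma c0_apply_le_norm (g : C₀(Q, ℂ)) (x : Q) : ‖g x‖ ≤ ‖g‖ := by
  rw [← ZeroAtInftyContinuousMap.norm_toBCF_eq_norm]
  exact BoundedContinuousFunction.norm_coe_le_norm g.toBCF x

/-- A `[0,1]`-valued compactly supported bump at `q` inside an open set `U`. -/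
lemma exists_bump (q : Q) (U : Set Q) (hU : IsOpen U) (hq : q ∈ U) :
    ∃ g : C₀(Q, ℂ), g q = 1 ∧ ‖g‖ ≤ 1 ∧ (∀ x, (g x).im = 0 ∧ 0 ≤ (g x).re ∧ (g x).re ≤ 1)
      ∧ ∀ x ∉ U, g x = 0 := by
  obtain ⟨f, hf1, hf0, hfc, hf01⟩ := exists_continuous_one_zero_of_isCompact
    (isCompact_singleton (x := q)) hU.isClosed_compl
    (Set.disjoint_singleton_left.mpr (by simpa using hq))
  have hcs : HasCompactSupport (fun x => ((f x : ℝ) : ℂ)) :=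
    hfc.comp_left (g := fun r : ℝ => (r : ℂ)) (by simp)
  refine ⟨⟨⟨fun x => ((f x : ℝ) : ℂ), by fun_prop⟩, hcs.is_zero_at_infty⟩, ?_, ?_, ?_, ?_⟩
  · simpa using hf1 rfl
  · apply c0_norm_le _ zero_le_one
    intro x
    have := hf01 x
    simp only [Set.mem_Icc] at this
    simp only [ZeroAtInftyContinuousMap.coe_mk, ContinuousMap.coe_mk, Complex.norm_real]
    rw [Real.norm_eq_abs, abs_of_nonneg this.1]
    exact this.2
  · intro x
    have := hf01 x
    simp_all [Set.mem_Icc]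
  · intro x hx
    simpa using hf0 hx

/-- Composition of a `C₀` function with a real function vanishing at zero. -/
noncomputable def compC0 (h : C₀(Q, ℂ)) (φ : ℝ → ℝ) (hφ : Continuous φ) (hφ0 : φ 0 = 0) :
    C₀(Q, ℂ) := by
  refine ⟨⟨fun x => ((φ (h x).re : ℝ) : ℂ), by fun_prop⟩, ?_⟩
  have h1 : Filter.Tendsto (fun z : ℂ => ((φ z.re : ℝ) : ℂ)) (nhds 0) (nhds 0) := by
    have h2 : ContinuousAt (fun z : ℂ => ((φ z.re : ℝ) : ℂ)) 0 := by fun_prop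
    have h3 := h2.tendsto
    simpa [hφ0] using h3
  exact h1.comp h.zero_at_infty'

@[simp] lemma compC0_apply (h : C₀(Q, ℂ)) (φ : ℝ → ℝ) (hφ : Continuous φ) (hφ0 : φ 0 = 0)
    (x : Q) : compC0 h φ hφ hφ0 x = ((φ (h x).re : ℝ) : ℂ) := rfl

end Aux

section Key

variable {Q : Type*} [TopologicalSpace Q] [LocallyCompactSpace Q] [T2Space Q]
variable {A : Type*} [NonUnitalCStarAlgebra A]

set_option maxHeartbeats 1000000 in
/-- The key distance estimate: if every `C₀` function mapped into a closed two-sided ideal `L`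
vanishes at `q`, then `ι h` for `h` real-valued with `h q = 1`, `‖h‖ ≤ 1` cannot be within
`1/8` of `L`. -/
lemma keyD (ι : C₀(Q, ℂ) →⋆ₙₐ[ℂ] A) (hisom : Isometry ι)
    (hcentral : ∀ (f : C₀(Q, ℂ)) (a : A), ι f * a = a * ι f)
    (L : TwoSidedIdeal A) (hLc : IsClosed (L : Set A)) (q : Q)
    (hker : ∀ f : C₀(Q, ℂ), ι f ∈ L → f q = 0)
    (h : C₀(Q, ℂ)) (hq1 : h q = 1) (him : ∀ x, (h x).im = 0) (hnorm : ‖h‖ ≤ 1)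
    (l : A) (hl : l ∈ L) (hdist : ‖ι h - l‖ < 1/8) : False := by
  classical
  -- real-valued data
  have hval : ∀ x, h x = (((h x).re : ℝ) : ℂ) := fun x => by
    apply Complex.ext <;> simp [him x]
  -- the functions f' and sf'
  set φf : ℝ → ℝ := fun s => max (s^4 - 1/2) 0 with hφf
  have hφfc : Continuous φf := by fun_prop
  have hφf0 : φf 0 = 0 := by norm_num [hφf]
  have hφfnn : ∀ s, 0 ≤ φf s := fun s => le_max_right _ _
  set f' : C₀(Q, ℂ) := compC0 h φf hφfc hφf0 with hf'
  set sf' : C₀(Q, ℂ) := compC0 h (fun s => Real.sqrt (φf s)) (by fun_prop)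
    (by simp [hφf0]) with hsf'
  set h4 : C₀(Q, ℂ) := h * h * h * h with hh4
  -- pointwise identities
  have hid2 : sf' * sf' = f' := by
    apply ZeroAtInftyContinuousMap.ext
    intro x
    simp only [ZeroAtInftyContinuousMap.coe_mul, Pi.mul_apply, hsf', hf', compC0_apply]
    rw [← Complex.ofReal_mul, Real.mul_self_sqrt (hφfnn _)]
  have hh4val : ∀ x, h4 x = ((((h x).re)^4 : ℝ) : ℂ) := by
    intro x
    obtain ⟨s, hs1, hs2⟩ : ∃ s : ℝ, h x = (s : ℂ) ∧ (h x).re = s := ⟨(h x).re, hval x, rfl⟩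
    simp only [hh4, ZeroAtInftyContinuousMap.coe_mul, Pi.mul_apply, hs1, hs2, Complex.ofReal_re]
    push_cast
    ring
  have hid1 : f' * h4 = (1/2 : ℂ) • f' + f' * f' := by
    apply ZeroAtInftyContinuousMap.ext
    intro x
    simp only [ZeroAtInftyContinuousMap.coe_mul, Pi.mul_apply,
      ZeroAtInftyContinuousMap.coe_add, Pi.add_apply, ZeroAtInftyContinuousMap.coe_smul,
      Pi.smul_apply, smul_eq_mul, hf', compC0_apply, hh4val x]
    rw [← Complex.ofReal_mul]
    set s : ℝ := (h x).re
    rcases le_or_gt (s^4) (1/2) with hs | hs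
    · have : φf s = 0 := max_eq_right (by linarith)
      simp [this]
    · have : φf s = s^4 - 1/2 := max_eq_left (by linarith)
      rw [this]
      push_cast
      ring
  have hfq : f' q = ((1:ℝ)/2 : ℂ) := by
    have : (h q).re = 1 := by rw [hq1]; simp
    simp [hf', compC0_apply, this, hφf]
    norm_num
  -- A-level elements
  set x := ι h with hx
  have hiotanorm : ∀ g : C₀(Q, ℂ), ‖ι g‖ = ‖g‖ := fun g => by
    rw [hisom.norm_map_of_map_zero (map_zero ι)]
  have hx1 : ‖x‖ ≤ 1 := by rw [hx, hiotanorm]; exact hnorm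
  have hstarh : star h = h := by
    apply ZeroAtInftyContinuousMap.ext
    intro x'
    simp only [ZeroAtInftyContinuousMap.coe_star, Pi.star_apply]
    apply Complex.ext <;> simp [him x']
  have hxsa : IsSelfAdjoint x := by
    rw [IsSelfAdjoint, hx, ← map_star, hstarh]
  set y := x * l with hy
  have hyL : y ∈ L := L.mul_mem_left x l hl
  set w := x * x with hw
  have hwsa : IsSelfAdjoint w := by
    rw [hw]
    show star (x * x) = x * x
    rw [star_mul, hxsa.star_eq]
  have hwnorm : ‖w‖ ≤ 1 := by
    calc ‖x * x‖ ≤ ‖x‖ * ‖x‖ := norm_mul_le x x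
    _ ≤ 1 := by nlinarith [norm_nonneg x]
  have hyx : ‖y - w‖ ≤ 1/8 := by
    have : y - w = -(x * (ι h - l)) := by rw [hy, hw, hx, mul_sub]; exact (neg_sub _ _).symm
    rw [this, norm_neg]
    calc ‖x * (ι h - l)‖ ≤ ‖x‖ * ‖ι h - l‖ := norm_mul_le _ _
    _ ≤ 1 * (1/8) := by
        apply mul_le_mul hx1 hdist.le (norm_nonneg _) zero_le_one
    _ = 1/8 := by norm_num
  have hynorm : ‖y‖ ≤ 9/8 := by
    calc ‖y‖ = ‖(y - w) + w‖ := by rw [sub_add_cancel]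
    _ ≤ ‖y - w‖ + ‖w‖ := norm_add_le _ _
    _ ≤ 1/8 + 1 := add_le_add hyx hwnorm
    _ = 9/8 := by norm_num
  set z := star y * y with hz
  have hzL : z ∈ L := L.mul_mem_left (star y) y hyL
  have hzsa : IsSelfAdjoint z := IsSelfAdjoint.star_mul_self y
  have hzw : ‖z - w * w‖ ≤ 17/64 := by
    have hdecomp : z - w * w = star y * (y - w) + star (y - w) * w := by
      rw [hz, star_sub, hwsa.star_eq]; noncomm_ring
    rw [hdecomp]
    calc ‖star y * (y - w) + star (y - w) * w‖
        ≤ ‖star y * (y - w)‖ + ‖star (y - w) * w‖ := norm_add_le _ _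
      _ ≤ ‖star y‖ * ‖y - w‖ + ‖star (y - w)‖ * ‖w‖ := add_le_add (norm_mul_le _ _) (norm_mul_le _ _)
      _ = ‖y‖ * ‖y - w‖ + ‖y - w‖ * ‖w‖ := by rw [norm_star, norm_star]
      _ ≤ (9/8) * (1/8) + (1/8) * 1 := by
          apply add_le_add
          · exact mul_le_mul hynorm hyx (norm_nonneg _) (by norm_num)
          · exact mul_le_mul hyx hwnorm (norm_nonneg _) (by norm_num)
      _ = 17/64 := by norm_num
  have hιh4 : ι h4 = w * w := by
    rw [hh4, map_mul, map_mul, map_mul, hw, ← hx]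
    noncomm_ring
  -- move to the unitization
  set B := Unitization ℂ A with hB
  letI : PartialOrder B := CStarAlgebra.spectralOrder B
  letI : StarOrderedRing B := CStarAlgebra.spectralOrderedRing B
  set E : ℝ → B := fun c => algebraMap ℝ B c with hE
  have hEsa : ∀ c : ℝ, star (E c) = E c := fun c => by
    simp [hE, Algebra.algebraMap_eq_smul_one, star_smul]
  have hEnn : ∀ c : ℝ, 0 ≤ c → 0 ≤ E c := by
    intro c hc
    have h1 : E c = star (E (Real.sqrt c)) * E (Real.sqrt c) := by
      rw [hEsa, hE, ← map_mul, Real.mul_self_sqrt hc]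
    rw [h1]
    exact star_mul_self_nonneg _
  have hEadd : ∀ c₁ c₂ : ℝ, E (c₁ + c₂) = E c₁ + E c₂ := fun c₁ c₂ => map_add _ _ _
  set F : B := ((ι f' : A) : B) with hF
  set SF : B := ((ι sf' : A) : B) with hSF
  set Z : B := ((z : A) : B) with hZ
  set X4 : B := ((ι h4 : A) : B) with hX4
  have hSS : SF * SF = F := by
    rw [hSF, hF, ← Unitization.inr_mul, ← map_mul, hid2]
  have hrealsa : ∀ g : C₀(Q, ℂ), (∀ x', (g x').im = 0) → IsSelfAdjoint ((ι g : A) : B) := by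
    intro g hg
    rw [Unitization.isSelfAdjoint_inr (R := ℂ)]
    rw [IsSelfAdjoint, ← map_star]
    congr 1
    apply ZeroAtInftyContinuousMap.ext
    intro x'
    simp only [ZeroAtInftyContinuousMap.coe_star, Pi.star_apply]
    apply Complex.ext <;> simp [hg x']
  have hFsa : IsSelfAdjoint F := hrealsa f' (fun x' => by simp [hf', compC0_apply])
  have hSFsa : IsSelfAdjoint SF := hrealsa sf' (fun x' => by simp [hsf', compC0_apply])
  have hFnn : 0 ≤ F := by
    rw [← hSS]
    nth_rewrite 1 [← hSFsa.star_eq]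
    exact star_mul_self_nonneg SF
  have hFFnn : 0 ≤ F * F := by
    nth_rewrite 1 [← hFsa.star_eq]
    exact star_mul_self_nonneg F
  -- commutation of SF with everything relevant
  have hcommA : ∀ a : A, SF * ((a : A) : B) = ((a : A) : B) * SF := by
    intro a
    rw [hSF, ← Unitization.inr_mul, ← Unitization.inr_mul, hcentral]
  have hcommE : ∀ c : ℝ, SF * E c = E c * SF := fun c => (Algebra.commutes c SF).symm ▸ rfl
  -- W := Z - X4 + E (17/64) is nonneg
  set W : B := Z - X4 + E (17/64) with hW
  have hZX4sa : IsSelfAdjoint (Z - X4) := by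
    apply IsSelfAdjoint.sub
    · rw [hZ, Unitization.isSelfAdjoint_inr (R := ℂ)]; exact hzsa
    · rw [hX4, Unitization.isSelfAdjoint_inr (R := ℂ)]
      rw [hιh4, IsSelfAdjoint, star_mul, hwsa.star_eq]
  have hZX4norm : ‖Z - X4‖ ≤ 17/64 := by
    rw [hZ, hX4, ← Unitization.inr_sub, Unitization.norm_inr, hιh4]
    exact hzw
  have hWnn : 0 ≤ W := by
    have h1 : -(E ‖Z - X4‖) ≤ Z - X4 := by
      have := IsSelfAdjoint.neg_algebraMap_norm_le_self hZX4sa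
      exact this
    have h2 : 0 ≤ (Z - X4) + E ‖Z - X4‖ := by
      have := add_le_add_left h1 (E ‖Z - X4‖)
      rwa [neg_add_cancel] at this
    have h3 : W = ((Z - X4) + E ‖Z - X4‖) + E (17/64 - ‖Z - X4‖) := by
      rw [hW]
      have := hEadd ‖Z - X4‖ (17/64 - ‖Z - X4‖)
      rw [show ‖Z - X4‖ + (17/64 - ‖Z - X4‖) = 17/64 by ring] at this
      rw [this]
      abel
    rw [h3]
    exact add_nonneg h2 (hEnn _ (by linarith))
  have hcommW : SF * W = W * SF := by
    rw [hW, mul_add, add_mul, mul_sub, sub_mul, hcommA z, hcommA (ι h4), hcommE]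
  have hFW : 0 ≤ F * W := by
    have h1 : F * W = SF * W * SF := by
      conv_lhs => rw [← hSS, mul_assoc, hcommW, ← mul_assoc]
    rw [h1]
    have h2 := star_left_conjugate_nonneg hWnn SF
    rwa [hSFsa.star_eq] at h2
  -- F * X4 = E (1/2) * F + F * F
  have hFX4 : F * X4 = E (1/2) * F + F * F := by
    have h1 : (ι (f' * h4) : B) = ((((1/2 : ℂ) • ι f' + ι f' * ι f' : A)) : B) := by
      rw [hid1, map_add, map_smul, map_mul]
    have h2 : F * X4 = ((ι f' * ι h4 : A) : B) := by
      rw [hF, hX4, Unitization.inr_mul]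
    rw [h2, ← map_mul, h1, Unitization.inr_add, Unitization.inr_smul, Unitization.inr_mul]
    congr 1
    have h3 : (1/2 : ℂ) = algebraMap ℝ ℂ (1/2) := by norm_num
    show (1/2 : ℂ) • ((ι f' : A) : B) = algebraMap ℝ B (1/2) * F
    rw [h3, algebraMap_smul, Algebra.algebraMap_eq_smul_one, smul_mul_assoc, one_mul, hF]
  set V : B := F * Z with hV
  have hVA : V = ((ι f' * z : A) : B) := by rw [hV, hF, hZ, ← Unitization.inr_mul]
  have hFE : ∀ c : ℝ, F * E c = E c * F := fun c => (Algebra.commutes c F).symm ▸ rfl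
  have hSES : SF * E (15/64) * SF = E (15/64) * F := by
    rw [hcommE, mul_assoc, hSS]
  have hEE : E (17/64) * F + E (15/64) * F = E (1/2) * F := by
    rw [← add_mul, ← hEadd]
    norm_num
  have hiden : F * Z - F * F = F * W + SF * E (15/64) * SF := by
    rw [hSES, hW, mul_add, mul_sub, hFX4, hFE]
    rw [show F * Z - (E (1/2) * F + F * F) + E (17/64) * F + E (15/64) * F
        = F * Z - F * F + (E (17/64) * F + E (15/64) * F - E (1/2) * F) by abel, hEE]
    abel
  have huV : F * F ≤ V := by
    rw [← sub_nonneg, hV, hiden]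
    refine add_nonneg hFW ?_
    have := star_left_conjugate_nonneg (hEnn (15/64) (by norm_num)) SF
    rwa [hSFsa.star_eq] at this
  have hVnn : 0 ≤ V := le_trans hFFnn huV
  -- ι (f' * f') is in the closure of L
  have hmem : ∀ ε : ℝ, 0 < ε → ∃ b ∈ L, ‖ι (f' * f') - b‖ < ε := by
    intro ε hε
    obtain ⟨N, hN⟩ := core_estimate F V hFsa hVnn huV (half_pos hε)
    set m : A := N.fst • (ι f') + N.snd * (ι f') with hm
    have hmB : ((m : A) : B) = N * F := by
      conv_rhs => rw [← Unitization.inl_fst_add_inr_snd_eq N]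
      rw [add_mul, hF, Unitization.inl_mul_inr, ← Unitization.inr_mul, hm,
        Unitization.inr_add]
    set b : A := (ι f' * (ι f' * z)) * m with hb
    have hbL : b ∈ L := by
      apply L.mul_mem_right
      apply L.mul_mem_left
      exact L.mul_mem_left _ _ hzL
    have hbB : ((b : A) : B) = (F * V) * (N * F) := by
      rw [hb, Unitization.inr_mul, Unitization.inr_mul, hmB, hVA, hF, Unitization.inr_mul]
    have hFF' : F * F = ((ι (f' * f') : A) : B) := by
      rw [hF, ← Unitization.inr_mul, ← map_mul]
    refine ⟨b, hbL, ?_⟩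
    have : ‖ι (f' * f') - b‖ = ‖F * F - (F * V) * (N * F)‖ := by
      rw [← Unitization.norm_inr (𝕜 := ℂ) (ι (f' * f') - b), Unitization.inr_sub, ← hFF', hbB]
    rw [this]
    exact lt_of_le_of_lt hN (half_lt_self hε)
  have hclomem : ι (f' * f') ∈ (L : Set A) := by
    apply hLc.closure_subset
    rw [Metric.mem_closure_iff]
    intro ε hε
    obtain ⟨b, hbL, hball⟩ := hmem ε hε
    exact ⟨b, hbL, by rwa [dist_eq_norm]⟩
  have := hker (f' * f') hclomem
  rw [ZeroAtInftyContinuousMap.coe_mul] at this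
  simp only [Pi.mul_apply, hfq] at this
  norm_num at this

end Key

section MIdeal

variable {Q : Type*} [TopologicalSpace Q] [LocallyCompactSpace Q] [T2Space Q]
variable {A : Type*} [NonUnitalCStarAlgebra A]

/-- The localized relative ideal used in the proof. -/
def Mset (ι : C₀(Q, ℂ) →⋆ₙₐ[ℂ] A) (q : Q) (L : TwoSidedIdeal A) : Set A :=
  {a | ∀ ε > (0:ℝ), ∃ g : C₀(Q, ℂ), (g q = 1 ∧ ‖g‖ ≤ 1 ∧ ∀ x, (g x).im = 0) ∧
    ∃ l ∈ L, ‖ι g * a - l‖ < ε}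

set_option maxHeartbeats 1000000 in
lemma mset_spec (ι : C₀(Q, ℂ) →⋆ₙₐ[ℂ] A) (hisom : Isometry ι)
    (hcentral : ∀ (f : C₀(Q, ℂ)) (a : A), ι f * a = a * ι f) (q : Q) (L : TwoSidedIdeal A) :
    (∃ I : TwoSidedIdeal A, (I : Set A) = Mset ι q L) ∧ IsClosed (Mset ι q L) ∧
      (L : Set A) ⊆ Mset ι q L ∧ {a : A | ∃ f : C₀(Q, ℂ), f q = 0 ∧ a = ι f} ⊆ Mset ι q L := by
  obtain ⟨g₀, hg₀1, hg₀n, hg₀v, -⟩ := exists_bump q Set.univ isOpen_univ (Set.mem_univ q)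
  have hg₀im : ∀ x, (g₀ x).im = 0 := fun x => (hg₀v x).1
  have hiotanorm : ∀ g : C₀(Q, ℂ), ‖ι g‖ = ‖g‖ := fun g => by
    rw [hisom.norm_map_of_map_zero (map_zero ι)]
  have hmul_le : ∀ (g : C₀(Q, ℂ)) (w : A), ‖g‖ ≤ 1 → ‖ι g * w‖ ≤ ‖w‖ := by
    intro g w hg
    calc ‖ι g * w‖ ≤ ‖ι g‖ * ‖w‖ := norm_mul_le _ _
    _ ≤ 1 * ‖w‖ := by
        apply mul_le_mul_of_nonneg_right _ (norm_nonneg w)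
        rw [hiotanorm]; exact hg
    _ = ‖w‖ := one_mul _
  refine ⟨?_, ?_, ?_, ?_⟩
  · -- it is a two-sided ideal
    refine ⟨TwoSidedIdeal.mk' (Mset ι q L) ?_ ?_ ?_ ?_ ?_, TwoSidedIdeal.coe_mk' _ _ _ _ _ _⟩
    · -- zero
      intro ε hε
      exact ⟨g₀, ⟨hg₀1, hg₀n, hg₀im⟩, 0, L.zero_mem, by simpa using hε⟩
    · -- add
      intro a b ha hb ε hε
      obtain ⟨g₁, ⟨hq₁, hn₁, him₁⟩, l₁, hl₁, he₁⟩ := ha (ε/2) (half_pos hε)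
      obtain ⟨g₂, ⟨hq₂, hn₂, him₂⟩, l₂, hl₂, he₂⟩ := hb (ε/2) (half_pos hε)
      refine ⟨g₁ * g₂, ⟨?_, ?_, ?_⟩, ι g₂ * l₁ + ι g₁ * l₂,
        L.add_mem (L.mul_mem_left _ _ hl₁) (L.mul_mem_left _ _ hl₂), ?_⟩
      · simp only [ZeroAtInftyContinuousMap.coe_mul, Pi.mul_apply, hq₁, hq₂, one_mul]
      · calc ‖g₁ * g₂‖ ≤ ‖g₁‖ * ‖g₂‖ := norm_mul_le _ _
        _ ≤ 1 := mul_le_one₀ hn₁ (norm_nonneg _) hn₂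
      · intro x
        simp only [ZeroAtInftyContinuousMap.coe_mul, Pi.mul_apply, Complex.mul_im,
          him₁ x, him₂ x]
        ring
      · have hkey : ι (g₁ * g₂) * (a + b) - (ι g₂ * l₁ + ι g₁ * l₂)
            = ι g₂ * (ι g₁ * a - l₁) + ι g₁ * (ι g₂ * b - l₂) := by
          have e1 : ι (g₁ * g₂) = ι g₂ * ι g₁ := by rw [mul_comm g₁ g₂, map_mul]
          have e2 : ι (g₁ * g₂) = ι g₁ * ι g₂ := by rw [map_mul]
          rw [mul_add]
          nth_rewrite 1 [e1]
          nth_rewrite 1 [e2]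
          rw [mul_sub, mul_sub, mul_assoc, mul_assoc]
          abel
        rw [hkey]
        calc ‖ι g₂ * (ι g₁ * a - l₁) + ι g₁ * (ι g₂ * b - l₂)‖
            ≤ ‖ι g₂ * (ι g₁ * a - l₁)‖ + ‖ι g₁ * (ι g₂ * b - l₂)‖ := norm_add_le _ _
          _ ≤ ‖ι g₁ * a - l₁‖ + ‖ι g₂ * b - l₂‖ :=
              add_le_add (hmul_le _ _ hn₂) (hmul_le _ _ hn₁)
          _ < ε/2 + ε/2 := add_lt_add he₁ he₂
          _ = ε := add_halves ε
    · -- neg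
      intro a ha ε hε
      obtain ⟨g, hg, l, hl, he⟩ := ha ε hε
      refine ⟨g, hg, -l, L.neg_mem hl, ?_⟩
      rw [mul_neg, neg_sub_neg, norm_sub_rev]
      exact he
    · -- mul_left
      intro x a ha ε hε
      have hx1 : (0:ℝ) < ‖x‖ + 1 := by positivity
      obtain ⟨g, hg, l, hl, he⟩ := ha (ε / (‖x‖ + 1)) (by positivity)
      refine ⟨g, hg, x * l, L.mul_mem_left _ _ hl, ?_⟩
      have hkey : ι g * (x * a) - x * l = x * (ι g * a - l) := by
        rw [← mul_assoc, hcentral g x, mul_assoc, mul_sub]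
      rw [hkey]
      calc ‖x * (ι g * a - l)‖ ≤ ‖x‖ * ‖ι g * a - l‖ := norm_mul_le _ _
        _ ≤ ‖x‖ * (ε / (‖x‖ + 1)) := mul_le_mul_of_nonneg_left he.le (norm_nonneg x)
        _ < ε := by
            rw [mul_div_assoc']
            rw [div_lt_iff₀ hx1]
            nlinarith [norm_nonneg x]
    · -- mul_right
      intro a x ha ε hε
      have hx1 : (0:ℝ) < ‖x‖ + 1 := by positivity
      obtain ⟨g, hg, l, hl, he⟩ := ha (ε / (‖x‖ + 1)) (by positivity)
      refine ⟨g, hg, l * x, L.mul_mem_right _ _ hl, ?_⟩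
      have hkey : ι g * (a * x) - l * x = (ι g * a - l) * x := by
        rw [← mul_assoc, sub_mul]
      rw [hkey]
      calc ‖(ι g * a - l) * x‖ ≤ ‖ι g * a - l‖ * ‖x‖ := norm_mul_le _ _
        _ ≤ (ε / (‖x‖ + 1)) * ‖x‖ := mul_le_mul_of_nonneg_right he.le (norm_nonneg x)
        _ < ε := by
            rw [div_mul_eq_mul_div, div_lt_iff₀ hx1]
            nlinarith [norm_nonneg x]
  · -- closed
    apply isClosed_of_closure_subset
    intro a ha ε hε
    rw [Metric.mem_closure_iff] at ha
    obtain ⟨b, hb, hab⟩ := ha (ε/2) (half_pos hε)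
    obtain ⟨g, ⟨hgq, hgn, hgim⟩, l, hl, he⟩ := hb (ε/2) (half_pos hε)
    refine ⟨g, ⟨hgq, hgn, hgim⟩, l, hl, ?_⟩
    have hkey : ι g * a - l = ι g * (a - b) + (ι g * b - l) := by
      rw [mul_sub]; abel
    rw [hkey]
    calc ‖ι g * (a - b) + (ι g * b - l)‖ ≤ ‖ι g * (a - b)‖ + ‖ι g * b - l‖ := norm_add_le _ _
      _ ≤ ‖a - b‖ + ‖ι g * b - l‖ := add_le_add_left (hmul_le _ _ hgn) _
      _ < ε/2 + ε/2 := by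
          apply add_lt_add _ he
          rw [← dist_eq_norm]
          exact hab
      _ = ε := add_halves ε
  · -- contains L
    intro a haL ε hε
    exact ⟨g₀, ⟨hg₀1, hg₀n, hg₀im⟩, ι g₀ * a, L.mul_mem_left _ _ haL, by simpa using hε⟩
  · -- contains the generators
    rintro a ⟨f, hfq, rfl⟩ ε hε
    set U : Set Q := {x | ‖f x‖ < ε/2} with hU
    have hUopen : IsOpen U := isOpen_lt (Continuous.norm (map_continuous f)) continuous_const
    have hqU : q ∈ U := by simp [hU, hfq, half_pos hε]
    obtain ⟨g, hgq, hgn, hgv, hgsupp⟩ := exists_bump q U hUopen hqU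
    refine ⟨g, ⟨hgq, hgn, fun x => (hgv x).1⟩, 0, L.zero_mem, ?_⟩
    rw [sub_zero, ← map_mul, hiotanorm]
    have hbound : ‖g * f‖ ≤ ε/2 := by
      apply c0_norm_le _ (half_pos hε).le
      intro x
      rw [show ((g * f) x) = g x * f x from rfl, norm_mul]
      by_cases hx : x ∈ U
      · have hg1 : ‖g x‖ ≤ 1 := le_trans (c0_apply_le_norm g x) hgn
        have hf2 : ‖f x‖ ≤ ε/2 := le_of_lt hx
        have := mul_le_mul hg1 hf2 (norm_nonneg _) zero_le_one
        linarith
      · rw [hgsupp x hx, norm_zero, zero_mul]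
        exact (half_pos hε).le
    exact lt_of_le_of_lt hbound (half_lt_self hε)

end MIdeal

theorem stmt6 {Q : Type*} [TopologicalSpace Q] [LocallyCompactSpace Q] [T2Space Q]
    {A : Type*} [NonUnitalCStarAlgebra A]
    (ι : C₀(Q, ℂ) →⋆ₙₐ[ℂ] A) (hisom : Isometry ι)
    (hcentral : ∀ (f : C₀(Q, ℂ)) (a : A), ι f * a = a * ι f)
    (hnondeg : closure
      (Submodule.span ℂ {x : A | ∃ (f : C₀(Q, ℂ)) (a : A), x = ι f * a} : Set A) = Set.univ)
    (hne : {q : Q | QuotientSimpleBy (Junif ι q)}.Nonempty)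
    (Q₀ : Set Q) (hQ₀ne : Q₀.Nonempty)
    (hQ₀ : Q₀ ⊆ {q : Q | QuotientSimpleBy (Junif ι q)}) :
    ∀ L : TwoSidedIdeal A, IsClosed (L : Set A) → (L : Set A) ≠ Set.univ →
      Set.range ι ∩ (L : Set A) ⊆ Set.range ι ∩ ⋂ q ∈ Q₀, Junif ι q →
      (L : Set A) ⊆ ⋂ q ∈ Q₀, Junif ι q := by
  intro L hLc hLproper hsub
  -- the kernel condition for each q ∈ Q₀
  have hker : ∀ q ∈ Q₀, ∀ f : C₀(Q, ℂ), ι f ∈ L → f q = 0 := by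
    intro q hq f hf
    have h1 : ι f ∈ ⋂ q' ∈ Q₀, Junif ι q' := (hsub ⟨⟨f, rfl⟩, hf⟩).2
    have h2 : ι f ∈ Junif ι q := Set.mem_iInter₂.mp h1 q hq
    -- use the 'N' ideal (Mset with the bottom ideal)
    obtain ⟨hNideal, hNclosed, -, hNgens⟩ := mset_spec ι hisom hcentral q ⊥
    have hJN : Junif ι q ⊆ Mset ι q ⊥ := by
      apply Set.sInter_subset_of_mem
      exact ⟨hNideal, hNclosed, hNgens⟩
    have h3 := hJN h2
    by_contra hfq0
    have hpos : 0 < ‖f q‖ := by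
      rw [norm_pos_iff]
      exact hfq0
    obtain ⟨g, ⟨hgq, hgn, -⟩, l, hl, he⟩ := h3 ‖f q‖ hpos
    rw [TwoSidedIdeal.mem_bot] at hl
    rw [hl, sub_zero, ← map_mul] at he
    have h4 : ‖f q‖ ≤ ‖ι (g * f)‖ := by
      rw [hisom.norm_map_of_map_zero (map_zero ι)]
      have h5 : ‖f q‖ = ‖(g * f) q‖ := by
        rw [show ((g * f) q) = g q * f q from rfl, hgq, one_mul]
      rw [h5]
      exact c0_apply_le_norm _ q
    exact absurd (lt_of_le_of_lt h4 he) (lt_irrefl _)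
  intro a ha
  rw [Set.mem_iInter₂]
  intro q hq
  obtain ⟨hJproper, hJmax⟩ := hQ₀ hq
  obtain ⟨⟨IM, hIMcoe⟩, hMclosed, hLM, hMgens⟩ := mset_spec ι hisom hcentral q L
  have hJM : Junif ι q ⊆ Mset ι q L := by
    apply Set.sInter_subset_of_mem
    exact ⟨⟨IM, hIMcoe⟩, hMclosed, hMgens⟩
  rcases hJmax IM (by rw [hIMcoe]; exact hMclosed) (by rw [hIMcoe]; exact hJM) with hM | hM
  · -- Mset = Junif : done
    have : a ∈ Mset ι q L := hLM ha
    rw [← hIMcoe, hM] at this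
    exact this
  · -- Mset = univ : contradiction via keyD
    exfalso
    obtain ⟨f₀, hf₀q, hf₀n, hf₀v, -⟩ := exists_bump q Set.univ isOpen_univ (Set.mem_univ q)
    have hf₀M : ι f₀ ∈ Mset ι q L := by
      rw [← hIMcoe, hM]
      exact Set.mem_univ _
    obtain ⟨g, ⟨hgq, hgn, hgim⟩, l, hl, he⟩ := hf₀M (1/8) (by norm_num)
    apply keyD ι hisom hcentral L hLc q (hker q hq) (g * f₀)
      (by simp only [ZeroAtInftyContinuousMap.coe_mul, Pi.mul_apply, hgq, hf₀q, one_mul])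
      (fun x => by
        simp only [ZeroAtInftyContinuousMap.coe_mul, Pi.mul_apply, Complex.mul_im,
          hgim x, (hf₀v x).1]
        ring)
      (by calc ‖g * f₀‖ ≤ ‖g‖ * ‖f₀‖ := norm_mul_le _ _
          _ ≤ 1 := mul_le_one₀ hgn (norm_nonneg _) hf₀n)
      l hl
      (by rwa [map_mul])
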